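/- A positive integer n is representable as n = a² + ab + b² with a and b coprime integers if and only if: (1) if 3^t divides n then t ≤ 1, and (2) every prime r ≠ 3 dividing n satisfies r ≡ 1 mod 3. -/

import Mathlib

lemma nec2 (n : ℕ) {a b : ℤ} (hab : IsCoprime a b) (h : (n:ℤ) = a^2 + a*b + b^2)
    (r : ℕ) (hr : r.Prime) (hrn : r ∣ n) (hr3 : r ≠ 3) : r % 3 = 1 := by
  haveI : Fact r.Prime := ⟨hr⟩
  set A : ZMod r := (a : ZMod r) with hA
  set B : ZMod r := (b : ZMod r) with hB
  have hone : ∃ u v : ℤ, u * a + v * b = 1 := by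
    obtain ⟨u, v, huv⟩ := hab; exact ⟨u, v, huv⟩
  have hzero : A^2 + A*B + B^2 = 0 := by
    have : ((n : ℤ) : ZMod r) = 0 := by
      rw [Int.cast_natCast, ZMod.natCast_eq_zero_iff]; exact hrn
    rw [h] at this; push_cast at this; exact this
  have hBne : B ≠ 0 := by
    intro hb0
    have hA0 : A = 0 := by
      have : A^2 = 0 := by rw [hb0] at hzero; simpa using hzero
      exact pow_eq_zero_iff (n := 2) (by norm_num) |>.mp this
    obtain ⟨u, v, huv⟩ := hone
    have : (1 : ZMod r) = 0 := by
      have := congrArg (fun z : ℤ => (z : ZMod r)) huv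
      push_cast at this
      rw [← hA, ← hB, hA0, hb0] at this
      simpa using this.symm
    exact one_ne_zero this
  set x : ZMod r := A * B⁻¹ with hx
  have hroot : x^2 + x + 1 = 0 := by
    have hB2 : B^2 ≠ 0 := pow_ne_zero _ hBne
    have hBinv : B * B⁻¹ = 1 := mul_inv_cancel₀ hBne
    have key : (x^2 + x + 1) * B^2 = A^2 + A*B + B^2 := by
      rw [hx]
      calc ((A*B⁻¹)^2 + A*B⁻¹ + 1) * B^2
          = A^2 * (B*B⁻¹)^2 + A*B*(B*B⁻¹) + B^2 := by ring
        _ = A^2 + A*B + B^2 := by rw [hBinv]; ring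
    rw [hzero] at key
    rcases mul_eq_zero.mp key with h' | h'
    · exact h'
    · exact absurd h' hB2
  have hxne1 : x ≠ 1 := by
    intro h1
    rw [h1] at hroot
    have h3 : (3 : ZMod r) = 0 := by linear_combination hroot
    have : r ∣ 3 := by
      have := (ZMod.natCast_eq_zero_iff 3 r).mp (by exact_mod_cast h3)
      exact this
    exact hr3 ((Nat.prime_dvd_prime_iff_eq hr (by norm_num)).mp this)
  have hx3 : x^3 = 1 := by linear_combination (x - 1) * hroot
  have hxunit : x * x^2 = 1 := by linear_combination hx3
  set ux : (ZMod r)ˣ := Units.mkOfMulEqOne x (x^2) hxunit with hux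
  have huxc : (ux : ZMod r) = x := rfl
  have hord3 : orderOf ux = 3 := by
    have hdvd : orderOf ux ∣ 3 := orderOf_dvd_of_pow_eq_one (by
      ext; push_cast [huxc]; exact hx3)
    rcases (Nat.Prime.eq_one_or_self_of_dvd (by norm_num) _ hdvd) with h1 | h3
    · exfalso
      have : ux = 1 := orderOf_eq_one_iff.mp h1
      apply hxne1
      rw [← huxc, this]; rfl
    · exact h3
  have hcard : orderOf ux ∣ r - 1 := by
    have := orderOf_dvd_card (x := ux)
    rwa [ZMod.card_units_eq_totient, Nat.totient_prime hr] at this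
  rw [hord3] at hcard
  have hr2 : 2 ≤ r := hr.two_le
  omega

lemma nec1 (n : ℕ) {a b : ℤ} (hab : IsCoprime a b) (h : (n:ℤ) = a^2 + a*b + b^2)
    (h9 : (9:ℕ) ∣ n) : False := by
  have h9' : (9:ℤ) ∣ a^2 + a*b + b^2 := by
    rw [← h]; exact_mod_cast Int.natCast_dvd_natCast.mpr h9
  have h3 : (3:ℤ) ∣ (a - b)^2 := by
    have : (3:ℤ) ∣ a^2 + a*b + b^2 := dvd_trans (by norm_num) h9'
    have e : (a - b)^2 = (a^2 + a*b + b^2) - 3*(a*b) := by ring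
    rw [e]; exact dvd_sub this ⟨a*b, rfl⟩
  have h3ab : (3:ℤ) ∣ a - b := by
    have hp : Prime (3:ℤ) := Int.prime_three
    exact hp.dvd_of_dvd_pow h3
  have h9sq : (9:ℤ) ∣ (a - b)^2 := by
    obtain ⟨k, hk⟩ := h3ab
    exact ⟨k^2, by rw [hk]; ring⟩
  have h3ab' : (3:ℤ) ∣ a * b := by
    have : (9:ℤ) ∣ 3*(a*b) := by
      have e : 3*(a*b) = (a^2+a*b+b^2) - (a-b)^2 := by ring
      rw [e]; exact dvd_sub h9' h9sq
    obtain ⟨k, hk⟩ := this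
    exact ⟨k, by linarith⟩
  have hp : Prime (3:ℤ) := Int.prime_three
  have h3a : (3:ℤ) ∣ a ∧ (3:ℤ) ∣ b := by
    rcases hp.dvd_mul.mp h3ab' with h' | h'
    · exact ⟨h', by obtain ⟨k,hk⟩ := h3ab; obtain ⟨l,hl⟩ := h'; exact ⟨l - k, by linarith⟩⟩
    · exact ⟨by obtain ⟨k,hk⟩ := h3ab; obtain ⟨l,hl⟩ := h'; exact ⟨l + k, by linarith⟩, h'⟩
  obtain ⟨u, v, huv⟩ := hab
  have : (3:ℤ) ∣ 1 := by
    rw [← huv]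
    exact dvd_add (Dvd.dvd.mul_left h3a.1 u) (Dvd.dvd.mul_left h3a.2 v)
  norm_num at this

lemma descent (p : ℕ) (hp : p.Prime) :
    ∀ m : ℕ, 0 < m → m < p → (∃ a b : ℤ, ((m : ℤ) * p = a^2 + a*b + b^2)) →
      ∃ c d : ℤ, (p:ℤ) = c^2 + c*d + d^2 := by
  intro m
  induction m using Nat.strong_induction_on with
  | _ m IH =>
  intro hm0 hmp hex
  obtain ⟨a, b, hab⟩ := hex
  rcases eq_or_lt_of_le (Nat.one_le_iff_ne_zero.mpr hm0.ne') with h1 | h1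
  · exact ⟨a, b, by rw [← hab, ← h1]; push_cast; ring⟩
  -- m ≥ 2 : reduce
  have hmz : (0:ℤ) < (m:ℤ) := by exact_mod_cast hm0
  set M : ℤ := (m : ℤ) with hM
  have reduce : ∀ x : ℤ, ∃ x₁ : ℤ, M ∣ x - x₁ ∧ (2*x₁)^2 ≤ M^2 := by
    intro x
    set r : ℤ := x % M with hr
    have hr0 : 0 ≤ r := Int.emod_nonneg x hmz.ne'
    have hrm : r < M := Int.emod_lt_of_pos x hmz
    have hxr : x - r = M * (x / M) := by
      have := Int.mul_ediv_add_emod x M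
      linarith
    by_cases hc : 2*r ≤ M
    · exact ⟨r, ⟨x / M, hxr⟩, by nlinarith⟩
    · refine ⟨r - M, ⟨x / M + 1, by rw [show x - (r - M) = (x - r) + M by ring, hxr]; ring⟩,
        by nlinarith⟩
  obtain ⟨a₁, hda, hba⟩ := reduce a
  obtain ⟨b₁, hdb, hbb⟩ := reduce b
  have hcong : M ∣ (a^2+a*b+b^2) - (a₁^2+a₁*b₁+b₁^2) := by
    have e : (a^2+a*b+b^2) - (a₁^2+a₁*b₁+b₁^2)
        = (a - a₁)*(a+a₁+b) + (b - b₁)*(b₁+b+a₁) := by ring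
    rw [e]
    exact dvd_add (hda.mul_right _) (hdb.mul_right _)
  have hdvdab : M ∣ (a^2+a*b+b^2) := by rw [← hab]; exact ⟨p, rfl⟩
  have hdvd1 : M ∣ a₁^2+a₁*b₁+b₁^2 := by
    have := dvd_sub hdvdab hcong
    simpa using this
  have hub : a₁^2+a₁*b₁+b₁^2 < M^2 := by nlinarith [sq_nonneg (a₁ - b₁), sq_nonneg (2*a₁ - 2*b₁)]
  have hlb : 0 ≤ a₁^2+a₁*b₁+b₁^2 := by nlinarith [sq_nonneg (2*a₁+b₁), sq_nonneg b₁]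
  obtain ⟨m₁, hm₁⟩ := hdvd1
  have hm₁lb : 0 ≤ m₁ := by nlinarith
  have hm₁ub : m₁ < M := by nlinarith
  rcases eq_or_lt_of_le hm₁lb with h0 | h0
  · -- m₁ = 0 : a₁ = b₁ = 0, m ∣ a,b, then m ∣ p, contradiction
    exfalso
    have hf0 : a₁^2+a₁*b₁+b₁^2 = 0 := by rw [hm₁, ← h0]; ring
    have hb₁ : b₁ = 0 := by nlinarith [sq_nonneg (2*a₁+b₁)]
    have ha₁ : a₁ = 0 := by nlinarith
    rw [ha₁] at hda; rw [hb₁] at hdb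
    simp only [sub_zero] at hda hdb
    obtain ⟨a', ha'⟩ := hda
    obtain ⟨b', hb'⟩ := hdb
    have : M^2 ∣ M * p := by
      refine ⟨a'^2+a'*b'+b'^2, ?_⟩
      rw [hab, ha', hb']; ring
    have hMdp : M ∣ (p:ℤ) := by
      obtain ⟨k, hk⟩ := this
      have : M * (p:ℤ) = M * (M * k) := by rw [hk]; ring
      exact ⟨k, by exact mul_left_cancel₀ hmz.ne' this⟩
    have : m ∣ p := by rw [hM] at hMdp; exact_mod_cast hMdp
    rcases hp.eq_one_or_self_of_dvd m this with h | h
    · omega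
    · omega
  -- m₁ ≥ 1 : compose with conjugate
  set u : ℤ := a*(a₁+b₁) + b*b₁ with hu
  set v : ℤ := b*a₁ - a*b₁ with hv
  have hfu : u^2 + u*v + v^2 = (a^2+a*b+b^2) * (a₁^2+a₁*b₁+b₁^2) := by
    rw [hu, hv]; ring
  have hMu : M ∣ u := by
    have e : u = (a - a₁)*(a₁+b₁) + (b - b₁)*b₁ + (a₁^2+a₁*b₁+b₁^2) := by rw [hu]; ring
    rw [e]
    exact dvd_add (dvd_add (hda.mul_right _) (hdb.mul_right _)) ⟨m₁, hm₁⟩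
  have hMv : M ∣ v := by
    have e : v = (b - b₁)*a₁ - (a - a₁)*b₁ := by rw [hv]; ring
    rw [e]
    exact dvd_sub (hdb.mul_right _) (hda.mul_right _)
  obtain ⟨u', hu'⟩ := hMu
  obtain ⟨v', hv'⟩ := hMv
  have key : m₁ * (p:ℤ) = u'^2 + u'*v' + v'^2 := by
    have h2 : M^2 * (m₁ * p) = M^2 * (u'^2 + u'*v' + v'^2) := by
      have : u^2+u*v+v^2 = (M*p) * (M*m₁) := by rw [hfu, ← hab, ← hm₁]
      rw [hu', hv'] at this
      linear_combination -this
    exact mul_left_cancel₀ (pow_ne_zero 2 hmz.ne') h2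
  have hm₁nat : ∃ k : ℕ, (k:ℤ) = m₁ := ⟨m₁.toNat, Int.toNat_of_nonneg hm₁lb⟩
  obtain ⟨k, hk⟩ := hm₁nat
  refine IH k ?_ ?_ ?_ ⟨u', v', by rw [hk, key]⟩
  · omega
  · omega
  · have : (k:ℤ) < (m:ℤ) := by rw [hk]; exact hm₁ub
    have hkm : k < m := by exact_mod_cast this
    omega

lemma prime_rep (p : ℕ) (hp : p.Prime) (h3 : p % 3 = 1) :
    ∃ c d : ℤ, (p:ℤ) = c^2 + c*d + d^2 := by
  haveI : Fact p.Prime := ⟨hp⟩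
  have hp2 : 2 ≤ p := hp.two_le
  -- get x with p ∣ x² + x + 1
  have h3card : 3 ∣ Fintype.card (ZMod p)ˣ := by
    rw [ZMod.card_units_eq_totient, Nat.totient_prime hp]
    omega
  obtain ⟨y, hy⟩ := exists_prime_orderOf_dvd_card (G := (ZMod p)ˣ) 3 h3card
  have hy3 : (y:ZMod p)^3 = 1 := by
    have := pow_orderOf_eq_one y
    rw [hy] at this
    have h' := congrArg (Units.val) this
    simpa using h'
  have hyne1 : (y:ZMod p) ≠ 1 := by
    intro h
    have : y = 1 := Units.ext h
    rw [this, orderOf_one] at hy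
    omega
  have hroot : (y:ZMod p)^2 + (y:ZMod p) + 1 = 0 := by
    have hfac : ((y:ZMod p) - 1) * ((y:ZMod p)^2 + (y:ZMod p) + 1) = 0 := by
      linear_combination hy3
    rcases mul_eq_zero.mp hfac with h | h
    · exact absurd (by linear_combination h) hyne1
    · exact h
  set x0 : ℤ := ((y:ZMod p).val : ℤ) with hx0
  have hpdvd : (p:ℤ) ∣ x0^2 + x0 + 1 := by
    have hcast : ((x0^2 + x0 + 1 : ℤ) : ZMod p) = 0 := by
      push_cast [hx0]
      rw [ZMod.natCast_val, ZMod.cast_id]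
      linear_combination hroot
    exact_mod_cast (ZMod.intCast_zmod_eq_zero_iff_dvd _ p).mp hcast
  -- reduce to representative with small absolute value
  have hpz : (0:ℤ) < (p:ℤ) := by exact_mod_cast hp.pos
  set r : ℤ := x0 % (p:ℤ) with hr
  have hr0 : 0 ≤ r := Int.emod_nonneg x0 hpz.ne'
  have hrm : r < p := Int.emod_lt_of_pos x0 hpz
  set x : ℤ := if 2*r + 1 ≤ p then r else r - p with hxdef
  have hdx : (p:ℤ) ∣ x0 - x := by
    have hxr : x0 - r = (p:ℤ) * (x0 / p) := by
      have := Int.mul_ediv_add_emod x0 (p:ℤ)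
      linarith
    by_cases hc : 2*r + 1 ≤ (p:ℤ)
    · rw [hxdef, if_pos hc]; exact ⟨x0 / p, hxr⟩
    · rw [hxdef, if_neg hc]
      exact ⟨x0 / p + 1, by rw [show x0 - (r - p) = (x0 - r) + p by ring, hxr]; ring⟩
  have hbx : (2*x + 1)^2 ≤ (p:ℤ)^2 := by
    by_cases hc : 2*r + 1 ≤ (p:ℤ)
    · rw [hxdef, if_pos hc]; nlinarith
    · rw [hxdef, if_neg hc]; push_neg at hc; nlinarith
  have hpdvdx : (p:ℤ) ∣ x^2 + x + 1 := by
    have e : x^2 + x + 1 = (x0^2 + x0 + 1) - (x0 - x) * (x0 + x + 1) := by ring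
    rw [e]
    exact dvd_sub hpdvd (hdx.mul_right _)
  obtain ⟨m, hm⟩ := hpdvdx
  have hub : x^2 + x + 1 < (p:ℤ)^2 := by nlinarith
  have hlb : 0 < x^2 + x + 1 := by nlinarith [sq_nonneg (2*x+1)]
  have hm0 : 0 < m := by nlinarith
  have hmub : m < p := by nlinarith
  obtain ⟨k, hk⟩ : ∃ k : ℕ, (k:ℤ) = m := ⟨m.toNat, Int.toNat_of_nonneg hm0.le⟩
  refine descent p hp k ?_ ?_ ⟨x, 1, ?_⟩
  · have : (0:ℤ) < k := by rw [hk]; exact hm0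
    exact_mod_cast this
  · have : (k:ℤ) < (p:ℤ) := by rw [hk]; exact hmub
    exact_mod_cast this
  · rw [hk, mul_comm, ← hm]; ring

lemma exists_prime_dvd_of_not_coprime {u v : ℤ} (h : ¬ IsCoprime u v)
    (hnz : ¬(u = 0 ∧ v = 0)) : ∃ q : ℕ, q.Prime ∧ (q:ℤ) ∣ u ∧ (q:ℤ) ∣ v := by
  set g : ℕ := Int.gcd u v with hg
  have hg1 : g ≠ 1 := fun h1 => h (Int.isCoprime_iff_gcd_eq_one.mpr h1)
  have hg0 : g ≠ 0 := by
    intro h0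
    exact hnz (Int.gcd_eq_zero_iff.mp h0)
  have hq : g.minFac.Prime := Nat.minFac_prime hg1
  refine ⟨g.minFac, hq, ?_, ?_⟩
  · exact dvd_trans (Int.natCast_dvd_natCast.mpr (Nat.minFac_dvd g)) (Int.gcd_dvd_left u v)
  · exact dvd_trans (Int.natCast_dvd_natCast.mpr (Nat.minFac_dvd g)) (Int.gcd_dvd_right u v)

/-- Composing a primitive representation of `m` with `3 = 1+1+1`. -/
lemma comp_three {m : ℕ} {a b : ℤ} (hab : IsCoprime a b) (hm : (m:ℤ) = a^2+a*b+b^2)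
    (h3 : ¬ (3:ℕ) ∣ m) :
    ∃ u v : ℤ, IsCoprime u v ∧ ((3*m : ℕ) : ℤ) = u^2 + u*v + v^2 := by
  refine ⟨a - b, a + 2*b, ?_, by push_cast; rw [hm]; ring⟩
  have h3ab : ¬ (3:ℤ) ∣ (a - b) := by
    intro hd
    apply h3
    have : (3:ℤ) ∣ (m:ℤ) := by
      rw [hm]
      obtain ⟨k, hk⟩ := hd
      exact ⟨3*k^2 + a*b, by rw [show a = 3*k + b by linarith]; ring⟩
    exact_mod_cast this
  by_contra hnc
  have hnz : ¬(a - b = 0 ∧ a + 2*b = 0) := by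
    rintro ⟨h1, h2⟩
    exact h3ab (by rw [h1]; exact dvd_zero 3)
  obtain ⟨q, hq, hqu, hqv⟩ := exists_prime_dvd_of_not_coprime hnc hnz
  have hq3a : (q:ℤ) ∣ 3*a := by
    have e : 3*a = 2*(a-b) + (a+2*b) := by ring
    rw [e]; exact dvd_add (hqu.mul_left 2) hqv
  have hq3b : (q:ℤ) ∣ 3*b := by
    have e : 3*b = (a+2*b) - (a-b) := by ring
    rw [e]; exact dvd_sub hqv hqu
  have hqne3 : q ≠ 3 := by
    rintro rfl
    exact h3ab hqu
  have hqp : Prime (q:ℤ) := Nat.prime_iff_prime_int.mp hq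
  have hq3 : ¬ (q:ℤ) ∣ 3 := by
    intro hd
    have hd' : q ∣ 3 := by exact_mod_cast hd
    exact hqne3 ((Nat.prime_dvd_prime_iff_eq hq (by norm_num)).mp hd')
  have hqa : (q:ℤ) ∣ a := ((hqp.dvd_mul.mp hq3a).resolve_left hq3)
  have hqb : (q:ℤ) ∣ b := ((hqp.dvd_mul.mp hq3b).resolve_left hq3)
  obtain ⟨s, t, hst⟩ := hab
  have : (q:ℤ) ∣ 1 := by
    rw [← hst]; exact dvd_add (hqa.mul_left s) (hqb.mul_left t)
  have := Int.le_of_dvd one_pos this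
  have := hq.two_le
  omega

lemma prime_not_dvd_both {x y : ℤ} (h : IsCoprime x y) {q : ℕ} (hq : q.Prime)
    (h1 : (q:ℤ) ∣ x) (h2 : (q:ℤ) ∣ y) : False := by
  obtain ⟨s, t, hst⟩ := h
  have hd : (q:ℤ) ∣ 1 := by rw [← hst]; exact dvd_add (h1.mul_left s) (h2.mul_left t)
  have := Int.le_of_dvd one_pos hd
  have := hq.two_le
  omega

lemma comp_prime {m p : ℕ} {a b c d : ℤ} (hab : IsCoprime a b) (hm : (m:ℤ) = a^2+a*b+b^2)
    (hp : p.Prime) (hp2 : p ≠ 2) (hp3 : p ≠ 3) (hpc : (p:ℤ) = c^2+c*d+d^2) :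
    ∃ u v : ℤ, IsCoprime u v ∧ ((m*p : ℕ) : ℤ) = u^2 + u*v + v^2 := by
  have hppos : (0:ℤ) < (p:ℤ) := by exact_mod_cast hp.pos
  -- coprimality of c d
  have hcd : IsCoprime c d := by
    rw [Int.isCoprime_iff_gcd_eq_one]
    set g : ℕ := Int.gcd c d with hg
    have hgc : (g:ℤ) ∣ c := Int.gcd_dvd_left c d
    have hgd : (g:ℤ) ∣ d := Int.gcd_dvd_right c d
    have hg2 : ((g:ℤ))^2 ∣ (p:ℤ) := by
      rw [hpc]
      exact dvd_add (dvd_add (pow_dvd_pow_of_dvd hgc 2)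
        (by rw [sq]; exact mul_dvd_mul hgc hgd)) (pow_dvd_pow_of_dvd hgd 2)
    have hg2' : g^2 ∣ p := by exact_mod_cast hg2
    have hgp : g ∣ p := dvd_trans ⟨g, (sq g)⟩ hg2'
    rcases hp.eq_one_or_self_of_dvd g hgp with h | h
    · exact h
    · exfalso
      rw [h] at hg2'
      have := Nat.le_of_dvd hp.pos hg2'
      nlinarith [hp.two_le]
  -- m positive
  have hm0 : 0 < m := by
    rcases Nat.eq_zero_or_pos m with h0 | h0
    · exfalso
      rw [h0] at hm
      push_cast at hm
      have hb0 : b = 0 := by nlinarith [sq_nonneg (2*a+b), sq_nonneg b]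
      have ha0 : a = 0 := by nlinarith
      exact prime_not_dvd_both hab Nat.prime_two (by rw [ha0]; exact dvd_zero _)
        (by rw [hb0]; exact dvd_zero _)
    · exact h0
  set u₁ : ℤ := a*c - b*d with hu₁
  set v₁ : ℤ := a*d + b*c + b*d with hv₁
  set u₂ : ℤ := a*c + a*d + b*d with hu₂
  set v₂ : ℤ := b*c - a*d with hv₂
  have hf1 : (m:ℤ) * p = u₁^2 + u₁*v₁ + v₁^2 := by rw [hu₁, hv₁, hm, hpc]; ring
  have hf2 : (m:ℤ) * p = u₂^2 + u₂*v₂ + v₂^2 := by rw [hu₂, hv₂, hm, hpc]; ring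
  have key : IsCoprime u₁ v₁ ∨ IsCoprime u₂ v₂ := by
    by_contra hcon
    push_neg at hcon
    obtain ⟨hc1, hc2⟩ := hcon
    have hmp0 : (m:ℤ) * p ≠ 0 := by positivity
    have hnz1 : ¬(u₁ = 0 ∧ v₁ = 0) := by
      rintro ⟨h1, h2⟩
      apply hmp0
      rw [hf1, h1, h2]; ring
    have hnz2 : ¬(u₂ = 0 ∧ v₂ = 0) := by
      rintro ⟨h1, h2⟩
      apply hmp0
      rw [hf2, h1, h2]; ring
    obtain ⟨q, hq, hqu, hqv⟩ := exists_prime_dvd_of_not_coprime hc1 hnz1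
    obtain ⟨q', hq', hqu', hqv'⟩ := exists_prime_dvd_of_not_coprime hc2 hnz2
    -- q ∣ p·a and q ∣ p·b
    have hqpa : (q:ℤ) ∣ (p:ℤ)*a := by
      have e : (p:ℤ)*a = u₁*(c+d) + v₁*d := by rw [hu₁, hv₁, hpc]; ring
      rw [e]; exact dvd_add (hqu.mul_right _) (hqv.mul_right _)
    have hqpb : (q:ℤ) ∣ (p:ℤ)*b := by
      have e : (p:ℤ)*b = v₁*c - u₁*d := by rw [hu₁, hv₁, hpc]; ring
      rw [e]; exact dvd_sub (hqv.mul_right _) (hqu.mul_right _)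
    have hqpa' : (q':ℤ) ∣ (p:ℤ)*a := by
      have e : (p:ℤ)*a = u₂*c - v₂*d := by rw [hu₂, hv₂, hpc]; ring
      rw [e]; exact dvd_sub (hqu'.mul_right _) (hqv'.mul_right _)
    have hqpb' : (q':ℤ) ∣ (p:ℤ)*b := by
      have e : (p:ℤ)*b = u₂*d + v₂*(c+d) := by rw [hu₂, hv₂, hpc]; ring
      rw [e]; exact dvd_add (hqu'.mul_right _) (hqv'.mul_right _)
    have hqp : ∀ qq : ℕ, qq.Prime → ((qq:ℤ) ∣ (p:ℤ)*a) → ((qq:ℤ) ∣ (p:ℤ)*b) → qq = p := by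
      intro qq hqq h1 h2
      obtain ⟨s, t, hst⟩ := hab
      have hd : (qq:ℤ) ∣ (p:ℤ) := by
        have e : (p:ℤ) = s*((p:ℤ)*a) + t*((p:ℤ)*b) := by
          have : (p:ℤ) * (s*a + t*b) = (p:ℤ) * 1 := by rw [hst]
          linarith [this]
        rw [e]; exact dvd_add (h1.mul_left s) (h2.mul_left t)
      have hd' : qq ∣ p := by exact_mod_cast hd
      exact (Nat.prime_dvd_prime_iff_eq hqq hp).mp hd'
    have hqep : q = p := hqp q hq hqpa hqpb
    have hqep' : q' = p := hqp q' hq' hqpa' hqpb'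
    rw [hqep] at hqu hqv
    rw [hqep'] at hqu' hqv'
    -- now p divides u₁ v₁ u₂ v₂
    have hP : Prime ((p:ℕ):ℤ) := Nat.prime_iff_prime_int.mp hp
    have hPa2cd : ((p:ℕ):ℤ) ∣ a*(2*c+d) := by
      have e : a*(2*c+d) = u₁ + u₂ := by rw [hu₁, hu₂]; ring
      rw [e]; exact dvd_add hqu hqu'
    have hPb2cd : ((p:ℕ):ℤ) ∣ b*(2*c+d) := by
      have e : b*(2*c+d) = v₁ + v₂ := by rw [hv₁, hv₂]; ring
      rw [e]; exact dvd_add hqv hqv'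
    have hPda2b : ((p:ℕ):ℤ) ∣ d*(a+2*b) := by
      have e : d*(a+2*b) = u₂ - u₁ := by rw [hu₁, hu₂]; ring
      rw [e]; exact dvd_sub hqu' hqu
    have hPd2ab : ((p:ℕ):ℤ) ∣ d*(2*a+b) := by
      have e : d*(2*a+b) = v₁ - v₂ := by rw [hv₁, hv₂]; ring
      rw [e]; exact dvd_sub hqv hqv'
    by_cases hP2cd : ((p:ℕ):ℤ) ∣ 2*c+d
    · by_cases hPd : ((p:ℕ):ℤ) ∣ d
      · have hP2c : ((p:ℕ):ℤ) ∣ 2*c := by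
          have e : 2*c = (2*c+d) - d := by ring
          rw [e]; exact dvd_sub hP2cd hPd
        rcases hP.dvd_mul.mp hP2c with h' | h'
        · have : p ∣ 2 := by exact_mod_cast h'
          exact hp2 ((Nat.prime_dvd_prime_iff_eq hp Nat.prime_two).mp this)
        · exact prime_not_dvd_both hcd hp h' hPd
      · have hPa2b : ((p:ℕ):ℤ) ∣ a+2*b := (hP.dvd_mul.mp hPda2b).resolve_left hPd
        have hP2ab : ((p:ℕ):ℤ) ∣ 2*a+b := (hP.dvd_mul.mp hPd2ab).resolve_left hPd
        have hP3a : ((p:ℕ):ℤ) ∣ 3*a := by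
          have e : 3*a = 2*(2*a+b) - (a+2*b) := by ring
          rw [e]; exact dvd_sub (hP2ab.mul_left 2) hPa2b
        have hP3b : ((p:ℕ):ℤ) ∣ 3*b := by
          have e : 3*b = 2*(a+2*b) - (2*a+b) := by ring
          rw [e]; exact dvd_sub (hPa2b.mul_left 2) hP2ab
        have hPn3 : ¬ ((p:ℕ):ℤ) ∣ 3 := by
          intro hd
          have : p ∣ 3 := by exact_mod_cast hd
          exact hp3 ((Nat.prime_dvd_prime_iff_eq hp (by norm_num)).mp this)
        exact prime_not_dvd_both hab hp ((hP.dvd_mul.mp hP3a).resolve_left hPn3)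
          ((hP.dvd_mul.mp hP3b).resolve_left hPn3)
    · exact prime_not_dvd_both hab hp
        ((hP.dvd_mul.mp hPa2cd).resolve_right hP2cd)
        ((hP.dvd_mul.mp hPb2cd).resolve_right hP2cd)
  rcases key with h | h
  · exact ⟨u₁, v₁, h, by push_cast; rw [hf1]⟩
  · exact ⟨u₂, v₂, h, by push_cast; rw [hf2]⟩

lemma suff : ∀ n : ℕ, 0 < n → ¬ (9:ℕ) ∣ n →
    (∀ r : ℕ, r.Prime → r ∣ n → r ≠ 3 → r % 3 = 1) →
    ∃ a b : ℤ, IsCoprime a b ∧ (n : ℤ) = a^2 + a*b + b^2 := by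
  intro n
  induction n using Nat.strong_induction_on with
  | _ n IH =>
  intro hn h9 hprimes
  rcases eq_or_lt_of_le (Nat.one_le_iff_ne_zero.mpr hn.ne') with h1 | h1
  · exact ⟨1, 0, isCoprime_one_left, by rw [← h1]; norm_num⟩
  -- n ≥ 2
  set p : ℕ := n.minFac with hpdef
  have hp : p.Prime := Nat.minFac_prime (by omega)
  have hpd : p ∣ n := Nat.minFac_dvd n
  obtain ⟨m, hnm⟩ := hpd
  have hm0 : 0 < m := by
    rcases Nat.eq_zero_or_pos m with h | h
    · exfalso; rw [h, mul_zero] at hnm; omega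
    · exact h
  have hmn : m < n := by
    have := hp.two_le
    calc m < 2 * m := by omega
    _ ≤ p * m := Nat.mul_le_mul_right m this
    _ = n := hnm.symm
  have hmdvd : m ∣ n := ⟨p, by rw [hnm]; ring⟩
  have h9m : ¬ (9:ℕ) ∣ m := fun h => h9 (h.trans hmdvd)
  have hprimesm : ∀ r : ℕ, r.Prime → r ∣ m → r ≠ 3 → r % 3 = 1 :=
    fun r hr hrd hr3 => hprimes r hr (hrd.trans hmdvd) hr3
  obtain ⟨a, b, hab, hm⟩ := IH m hmn hm0 h9m hprimesm
  by_cases hp3 : p = 3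
  · -- n = 3 * m, with 3 ∤ m
    have h3m : ¬ (3:ℕ) ∣ m := by
      intro h3
      apply h9
      obtain ⟨k, hk⟩ := h3
      exact ⟨k, by rw [hnm, hp3, hk]; ring⟩
    obtain ⟨u, v, huv, hfv⟩ := comp_three hab hm h3m
    exact ⟨u, v, huv, by rw [hnm, hp3]; exact_mod_cast hfv⟩
  · have hp31 : p % 3 = 1 := hprimes p hp (⟨m, hnm⟩) hp3
    have hp2 : p ≠ 2 := by omega
    obtain ⟨c, d, hcd⟩ := prime_rep p hp hp31
    obtain ⟨u, v, huv, hfv⟩ := comp_prime hab hm hp hp2 hp3 hcd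
    exact ⟨u, v, huv, by rw [hnm, mul_comm]; exact_mod_cast hfv⟩

/-- A positive integer `n` is representable as `n = a² + ab + b²` with `a` and `b`
coprime integers if and only if: (1) if `3^t` divides `n` then `t ≤ 1`, and (2) every
prime `r ≠ 3` dividing `n` satisfies `r ≡ 1 mod 3`. -/
theorem stmt5 (n : ℕ) (hn : 0 < n) :
    (∃ a b : ℤ, IsCoprime a b ∧ (n : ℤ) = a^2 + a*b + b^2) ↔
      ((∀ t : ℕ, 3^t ∣ n → t ≤ 1) ∧
        (∀ r : ℕ, r.Prime → r ∣ n → r ≠ 3 → r % 3 = 1)) := by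
  constructor
  · rintro ⟨a, b, hab, h⟩
    constructor
    · intro t ht
      by_contra h2
      push_neg at h2
      have h9 : (9:ℕ) ∣ n := by
        refine dvd_trans ?_ ht
        have : (9:ℕ) = 3^2 := by norm_num
        rw [this]
        exact pow_dvd_pow 3 (by omega)
      exact nec1 n hab h h9
    · exact fun r hr hrn hr3 => nec2 n hab h r hr hrn hr3
  · rintro ⟨h1, h2⟩
    apply suff n hn ?_ h2
    intro h9
    have : (3:ℕ)^2 ∣ n := by norm_num; exact h9
    have := h1 2 this
    omega
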